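/- Let {(σ_n, v_n, u_n)}_{n∈ℕ} be a singular system for the compact linear operator K : X → Y such that (u_n) spans the closure of the range of K and (v_n) spans the closure of the range of K*. Let δ > 0, E > 0, c > 0, d₁ > 0, d₂ > 0, and set α = c (δ/E)^{2/3}. Suppose x = K* z with ‖z‖ ≤ E, y^δ ∈ Y with ‖y^δ − K x‖ ≤ δ, that (d₁/α) σ_n ≥ 1 for every n with |σ_n ⟨y^δ, u_n⟩| > α/2 or |σ_n ⟨K x, u_n⟩| > α/2, and that σ_n ≤ √(d₂ α) for all n. Then the ℓ¹-SVD reconstruction x^{α,δ} := ∑_n (1/σ_n²) S_α(σ_n ⟨y^δ, u_n⟩) v_n satisfies ‖x^{α,δ} − x‖ ≤ (d₁/c + √(d₂ c)) δ^{1/3} E^{2/3}. -/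

import Mathlib

open scoped InnerProductSpace

/-- The soft thresholding function `S_α`. -/
noncomputable def softThresh (α t : ℝ) : ℝ :=
  if t ≤ -(α / 2) then t + α / 2
  else if α / 2 ≤ t then t - α / 2
  else 0

lemma softThresh_eq_zero {α t : ℝ} (h : |t| ≤ α / 2) : softThresh α t = 0 := by
  rw [abs_le] at h
  unfold softThresh
  split_ifs <;> linarith

lemma abs_softThresh_sub_self {α : ℝ} (hα : 0 ≤ α) (t : ℝ) : |softThresh α t - t| ≤ |t| := by
  have h1 := le_abs_self t
  have h2 := neg_abs_le t
  unfold softThresh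
  split_ifs <;> rw [abs_le] <;> constructor <;> linarith

lemma abs_softThresh_sub {α : ℝ} (hα : 0 ≤ α) (s t : ℝ) :
    |softThresh α s - softThresh α t| ≤ |s - t| := by
  have h1 := le_abs_self (s - t)
  have h2 := neg_abs_le (s - t)
  unfold softThresh
  split_ifs <;> rw [abs_le] <;> constructor <;> linarith

section Hilbert

variable {X : Type*} [NormedAddCommGroup X] [InnerProductSpace ℝ X] [CompleteSpace X]

set_option linter.unusedSectionVars false

lemma inner_hasSum_orthonormal {v : ℕ → X} (hv : Orthonormal ℝ v) {f : ℕ → ℝ} {s : X}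
    (hs : HasSum (fun n => f n • v n) s) (n : ℕ) : ⟪v n, s⟫_ℝ = f n := by
  have h := hs.mapL (innerSL ℝ (v n))
  have h2 : (fun m => innerSL ℝ (v n) (f m • v m)) = fun m => if m = n then f n else 0 := by
    funext m
    rw [innerSL_apply_apply, real_inner_smul_right]
    rcases eq_or_ne m n with rfl | hmn
    · simp [hv.1 m, real_inner_self_eq_norm_sq]
    · simp [hv.2 hmn.symm, hmn]
  rw [h2] at h
  exact ((hasSum_ite_eq n (f n)).unique h).symm

lemma summable_orthonormal_smul {v : ℕ → X} (hv : Orthonormal ℝ v) {f : ℕ → ℝ}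
    (hf : Summable fun n => ‖f n‖ ^ 2) : Summable fun n => f n • v n := by
  have := (hv.orthogonalFamily.summable_iff_norm_sq_summable f).2 hf
  simpa [LinearIsometry.toSpanSingleton_apply] using this

lemma norm_hasSum_orthonormal_le {v : ℕ → X} (hv : Orthonormal ℝ v) {f : ℕ → ℝ} {s : X}
    (hs : HasSum (fun n => f n • v n) s) {g : ℕ → ℝ} (hfg : ∀ n, |f n| ≤ g n)
    (hg : Summable fun n => g n ^ 2) {C : ℝ} (hC : 0 ≤ C) (hgC : ∑' n, g n ^ 2 ≤ C ^ 2) :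
    ‖s‖ ≤ C := by
  have hfg2 : ∀ n, f n ^ 2 ≤ g n ^ 2 := fun n => by
    have h := hfg n
    have h0 := abs_nonneg (f n)
    calc f n ^ 2 = |f n| ^ 2 := (sq_abs _).symm
    _ ≤ g n ^ 2 := by nlinarith
  have hf2 : Summable fun n => f n ^ 2 :=
    Summable.of_nonneg_of_le (fun n => sq_nonneg _) hfg2 hg
  have hinner : HasSum (fun n => f n ^ 2) ⟪s, s⟫_ℝ := by
    have h := hs.mapL (innerSL ℝ s)
    have h2 : (fun n => innerSL ℝ s (f n • v n)) = fun n => f n ^ 2 := by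
      funext n
      rw [innerSL_apply_apply, real_inner_smul_right, real_inner_comm,
        inner_hasSum_orthonormal hv hs n]
      ring
    rwa [h2] at h
  have hnorm : ‖s‖ ^ 2 ≤ C ^ 2 := by
    rw [← real_inner_self_eq_norm_sq, ← hinner.tsum_eq]
    exact le_trans (Summable.tsum_le_tsum hfg2 hf2 hg) hgC
  calc ‖s‖ = Real.sqrt (‖s‖ ^ 2) := (Real.sqrt_sq (norm_nonneg s)).symm
  _ ≤ Real.sqrt (C ^ 2) := Real.sqrt_le_sqrt hnorm
  _ = C := Real.sqrt_sq hC

lemma hasSum_inner_smul_of_mem_closure {v : ℕ → X} (hv : Orthonormal ℝ v) {x : X}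
    (hx : x ∈ (Submodule.span ℝ (Set.range v)).topologicalClosure) :
    HasSum (fun n => ⟪v n, x⟫_ℝ • v n) x := by
  have hf2 : Summable fun n => ‖⟪v n, x⟫_ℝ‖ ^ 2 := hv.inner_products_summable x
  obtain ⟨s, hs⟩ := summable_orthonormal_smul hv hf2
  have hcoef : ∀ n, ⟪v n, x - s⟫_ℝ = 0 := by
    intro n
    rw [inner_sub_right, inner_hasSum_orthonormal hv hs n, sub_self]
  have hsV : s ∈ (Submodule.span ℝ (Set.range v)).topologicalClosure := by
    refine (Submodule.isClosed_topologicalClosure _).mem_of_tendsto hs.tendsto_sum_nat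
      (Filter.Eventually.of_forall fun m => ?_)
    refine Submodule.sum_mem _ fun i _ => Submodule.smul_mem _ _ ?_
    exact Submodule.le_topologicalClosure _ (Submodule.subset_span ⟨i, rfl⟩)
  set w := x - s with hw
  have hwV : w ∈ (Submodule.span ℝ (Set.range v)).topologicalClosure :=
    Submodule.sub_mem _ hx hsV
  have hspan : Submodule.span ℝ (Set.range v) ≤ (ℝ ∙ w)ᗮ := by
    rw [Submodule.span_le]
    rintro _ ⟨n, rfl⟩
    rw [SetLike.mem_coe, Submodule.mem_orthogonal_singleton_iff_inner_right, real_inner_comm]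
    exact hcoef n
  have hVle : (Submodule.span ℝ (Set.range v)).topologicalClosure ≤ (ℝ ∙ w)ᗮ :=
    Submodule.topologicalClosure_minimal _ hspan (Submodule.isClosed_orthogonal _)
  have hww : ⟪w, w⟫_ℝ = 0 :=
    Submodule.mem_orthogonal_singleton_iff_inner_right.1 (hVle hwV)
  have hws : w = 0 := inner_self_eq_zero.1 hww
  have hxs : x = s := by rwa [sub_eq_zero] at hws
  rw [hxs] at hs ⊢
  exact hs

end Hilbert

/-- Error estimate for the `ℓ¹`-SVD method with the a priori choice `α = c (δ/E)^{2/3}`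
under the source condition `x = K* z`, `‖z‖ ≤ E`:
`‖x^{α,δ} − x‖ ≤ (d₁/c + √(d₂ c)) δ^{1/3} E^{2/3}`. -/
theorem l1SVD_rate_one_third {X Y : Type*}
    [NormedAddCommGroup X] [InnerProductSpace ℝ X] [CompleteSpace X]
    [NormedAddCommGroup Y] [InnerProductSpace ℝ Y] [CompleteSpace Y]
    (K : X →L[ℝ] Y) (hK : IsCompactOperator K)
    (σ : ℕ → ℝ) (v : ℕ → X) (u : ℕ → Y)
    (hσ : ∀ n, 0 < σ n) (hv : Orthonormal ℝ v) (hu : Orthonormal ℝ u)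
    (hKv : ∀ n, K (v n) = σ n • u n)
    (hKadj : ∀ n, (ContinuousLinearMap.adjoint K) (u n) = σ n • v n)
    (huspan : (Submodule.span ℝ (Set.range u)).topologicalClosure
      = (LinearMap.range (K : X →ₗ[ℝ] Y)).topologicalClosure)
    (hvspan : (Submodule.span ℝ (Set.range v)).topologicalClosure
      = (LinearMap.range ((ContinuousLinearMap.adjoint K : Y →L[ℝ] X) : Y →ₗ[ℝ] X)).topologicalClosure)
    (δ E c d₁ d₂ : ℝ) (hδ : 0 < δ) (hE : 0 < E) (hc : 0 < c) (hd₁ : 0 < d₁) (hd₂ : 0 < d₂)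
    (α : ℝ) (hαdef : α = c * (δ / E) ^ ((2 : ℝ) / 3))
    (z : Y) (hz : ‖z‖ ≤ E) (x : X) (hx : x = ContinuousLinearMap.adjoint K z)
    (yδ : Y) (hyδ : ‖yδ - K x‖ ≤ δ)
    (hd₁σ : ∀ n, (α / 2 < |σ n * ⟪yδ, u n⟫_ℝ| ∨ α / 2 < |σ n * ⟪K x, u n⟫_ℝ|)
      → 1 ≤ d₁ / α * σ n)
    (hd₂σ : ∀ n, σ n ≤ Real.sqrt (d₂ * α)) :
    ‖(∑' n, ((σ n ^ 2)⁻¹ * softThresh α (σ n * ⟪yδ, u n⟫_ℝ)) • v n) - x‖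
      ≤ (d₁ / c + Real.sqrt (d₂ * c)) * δ ^ ((1 : ℝ) / 3) * E ^ ((2 : ℝ) / 3) := by
  have hα : 0 < α := by
    rw [hαdef]
    exact mul_pos hc (Real.rpow_pos_of_pos (div_pos hδ hE) _)
  set a : ℕ → ℝ := fun n => σ n * ⟪yδ, u n⟫_ℝ with ha
  set abar : ℕ → ℝ := fun n => σ n * ⟪K x, u n⟫_ℝ with habar
  set Δ : ℕ → ℝ := fun n => ⟪u n, yδ - K x⟫_ℝ with hΔdef
  set zu : ℕ → ℝ := fun n => ⟪u n, z⟫_ℝ with hzudef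
  -- key inner product identities
  have hxv : ∀ n, ⟪v n, x⟫_ℝ = σ n * zu n := by
    intro n
    rw [real_inner_comm, hx, ContinuousLinearMap.adjoint_inner_left, hKv n,
      real_inner_smul_right, real_inner_comm]
  have hKxu : ∀ n, ⟪K x, u n⟫_ℝ = σ n * (σ n * zu n) := by
    intro n
    rw [← ContinuousLinearMap.adjoint_inner_right, hKadj n, real_inner_smul_right,
      real_inner_comm, hxv n]
  have habar' : ∀ n, abar n = σ n ^ 2 * (σ n * zu n) := by
    intro n
    simp only [habar, hKxu n]
    ring
  have haΔ : ∀ n, a n - abar n = σ n * Δ n := by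
    intro n
    simp only [ha, habar, hΔdef, inner_sub_right]
    rw [real_inner_comm (u n) yδ, real_inner_comm (u n) (K x)]
    ring
  -- the two error pieces
  set p : ℕ → ℝ := fun n => (σ n ^ 2)⁻¹ * (softThresh α (a n) - softThresh α (abar n)) with hpdef
  set q : ℕ → ℝ := fun n => (σ n ^ 2)⁻¹ * (softThresh α (abar n) - abar n) with hqdef
  have hsplit : ∀ n, (σ n ^ 2)⁻¹ * softThresh α (a n) = (σ n * zu n) + (p n + q n) := by
    intro n
    have hσn := (hσ n).ne'
    simp only [hpdef, hqdef]
    rw [habar' n]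
    field_simp
    ring
  -- pointwise bounds
  have hp : ∀ n, |p n| ≤ d₁ / α * |Δ n| := by
    intro n
    have hσn := hσ n
    have hinv : (0:ℝ) < (σ n ^ 2)⁻¹ := by positivity
    by_cases h : α / 2 < |a n| ∨ α / 2 < |abar n|
    · have h1 : 1 ≤ d₁ / α * σ n := hd₁σ n h
      have hL : |softThresh α (a n) - softThresh α (abar n)| ≤ σ n * |Δ n| := by
        calc |softThresh α (a n) - softThresh α (abar n)| ≤ |a n - abar n| :=
          abs_softThresh_sub hα.le _ _
        _ = σ n * |Δ n| := by rw [haΔ n, abs_mul, abs_of_pos hσn]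
      have habs : |p n| = (σ n ^ 2)⁻¹ * |softThresh α (a n) - softThresh α (abar n)| := by
        rw [hpdef, abs_mul, abs_of_pos hinv]
      rw [habs]
      have hσ2 : (σ n ^ 2)⁻¹ * σ n ^ 2 = 1 := inv_mul_cancel₀ (by positivity)
      have hΔn : (0:ℝ) ≤ |Δ n| := abs_nonneg _
      nlinarith [mul_le_mul_of_nonneg_left hL hinv.le,
        mul_nonneg (mul_nonneg hinv.le hσn.le) hΔn]
    · push_neg at h
      have h1 : softThresh α (a n) = 0 := softThresh_eq_zero h.1
      have h2 : softThresh α (abar n) = 0 := softThresh_eq_zero h.2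
      simp only [hpdef, h1, h2, sub_zero, sub_self, mul_zero, abs_zero]
      positivity
  have hq : ∀ n, |q n| ≤ Real.sqrt (d₂ * α) * |zu n| := by
    intro n
    have hσn := hσ n
    have hinv : (0:ℝ) < (σ n ^ 2)⁻¹ := by positivity
    have hL : |softThresh α (abar n) - abar n| ≤ σ n ^ 2 * (σ n * |zu n|) := by
      calc |softThresh α (abar n) - abar n| ≤ |abar n| := abs_softThresh_sub_self hα.le _
      _ = σ n ^ 2 * (σ n * |zu n|) := by
          rw [habar' n, abs_mul, abs_mul, abs_of_pos hσn, abs_of_pos (by positivity : (0:ℝ) < σ n ^ 2)]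
    have habs : |q n| = (σ n ^ 2)⁻¹ * |softThresh α (abar n) - abar n| := by
      rw [hqdef, abs_mul, abs_of_pos hinv]
    rw [habs]
    have hσ2 : (σ n ^ 2)⁻¹ * σ n ^ 2 = 1 := inv_mul_cancel₀ (by positivity)
    have hsq := hd₂σ n
    have hzn : (0:ℝ) ≤ |zu n| := abs_nonneg _
    calc (σ n ^ 2)⁻¹ * |softThresh α (abar n) - abar n|
        ≤ (σ n ^ 2)⁻¹ * (σ n ^ 2 * (σ n * |zu n|)) := mul_le_mul_of_nonneg_left hL hinv.le
    _ = σ n * |zu n| := by rw [← mul_assoc, hσ2, one_mul]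
    _ ≤ Real.sqrt (d₂ * α) * |zu n| := mul_le_mul_of_nonneg_right hsq hzn
  -- summabilities via Bessel
  have hΔ2 : Summable fun n => |Δ n| ^ 2 := by
    have := hu.inner_products_summable (yδ - K x)
    simpa only [Real.norm_eq_abs] using this
  have hZ2 : Summable fun n => |zu n| ^ 2 := by
    have := hu.inner_products_summable z
    simpa only [Real.norm_eq_abs] using this
  have hΔB : ∑' n, |Δ n| ^ 2 ≤ δ ^ 2 := by
    have h1 := hu.tsum_inner_products_le (yδ - K x)
    simp only [Real.norm_eq_abs] at h1
    exact h1.trans (pow_le_pow_left₀ (norm_nonneg _) hyδ 2)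
  have hZB : ∑' n, |zu n| ^ 2 ≤ E ^ 2 := by
    have h1 := hu.tsum_inner_products_le z
    simp only [Real.norm_eq_abs] at h1
    exact h1.trans (pow_le_pow_left₀ (norm_nonneg _) hz 2)
  -- HasSum for x
  have hxV : x ∈ (Submodule.span ℝ (Set.range v)).topologicalClosure := by
    rw [hvspan]
    exact Submodule.le_topologicalClosure _ ⟨z, hx.symm⟩
  have hX : HasSum (fun n => (σ n * zu n) • v n) x := by
    have h := hasSum_inner_smul_of_mem_closure hv hxV
    have h2 : (fun n => ⟪v n, x⟫_ℝ • v n) = fun n => (σ n * zu n) • v n := by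
      funext n; rw [hxv n]
    rwa [h2] at h
  -- Summability of p and q series
  have hp2 : Summable fun n => ‖p n‖ ^ 2 := by
    refine Summable.of_nonneg_of_le (fun n => sq_nonneg _) (fun n => ?_) (hΔ2.mul_left ((d₁/α)^2))
    rw [Real.norm_eq_abs]
    have h := hp n
    have h0 := abs_nonneg (p n)
    have h1 : (0:ℝ) ≤ d₁ / α := by positivity
    nlinarith [abs_nonneg (Δ n)]
  have hq2 : Summable fun n => ‖q n‖ ^ 2 := by
    refine Summable.of_nonneg_of_le (fun n => sq_nonneg _) (fun n => ?_)
      (hZ2.mul_left ((Real.sqrt (d₂ * α))^2))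
    rw [Real.norm_eq_abs]
    have h := hq n
    have h0 := abs_nonneg (q n)
    have h1 : (0:ℝ) ≤ Real.sqrt (d₂ * α) := Real.sqrt_nonneg _
    nlinarith [abs_nonneg (zu n)]
  obtain ⟨P, hP⟩ := summable_orthonormal_smul hv hp2
  obtain ⟨Q, hQ⟩ := summable_orthonormal_smul hv hq2
  -- total HasSum
  have hT : HasSum (fun n => ((σ n ^ 2)⁻¹ * softThresh α (a n)) • v n) (x + (P + Q)) := by
    have h := hX.add (hP.add hQ)
    have h2 : (fun n => (σ n * zu n) • v n + (p n • v n + q n • v n))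
        = fun n => ((σ n ^ 2)⁻¹ * softThresh α (a n)) • v n := by
      funext n
      rw [hsplit n]
      rw [add_smul, add_smul]
    rwa [h2] at h
  have htsum : (∑' n, ((σ n ^ 2)⁻¹ * softThresh α (a n)) • v n) = x + (P + Q) := hT.tsum_eq
  rw [htsum]
  have hPQ : ‖x + (P + Q) - x‖ ≤ ‖P‖ + ‖Q‖ := by
    have : x + (P + Q) - x = P + Q := by abel
    rw [this]
    exact norm_add_le _ _
  -- norm bounds
  have hPn : ‖P‖ ≤ d₁ / α * δ := by
    refine norm_hasSum_orthonormal_le hv hP hp ?_ (by positivity) ?_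
    · have h : (fun n => (d₁ / α * |Δ n|) ^ 2) = fun n => (d₁/α)^2 * |Δ n| ^ 2 := by
        funext n; ring
      rw [h]
      exact hΔ2.mul_left _
    · have h : (fun n => (d₁ / α * |Δ n|) ^ 2) = fun n => (d₁/α)^2 * |Δ n| ^ 2 := by
        funext n; ring
      rw [h, tsum_mul_left, mul_pow]
      exact mul_le_mul_of_nonneg_left hΔB (by positivity)
  have hQn : ‖Q‖ ≤ Real.sqrt (d₂ * α) * E := by
    refine norm_hasSum_orthonormal_le hv hQ hq ?_ (by positivity) ?_
    · have h : (fun n => (Real.sqrt (d₂ * α) * |zu n|) ^ 2)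
        = fun n => (Real.sqrt (d₂ * α))^2 * |zu n| ^ 2 := by funext n; ring
      rw [h]
      exact hZ2.mul_left _
    · have h : (fun n => (Real.sqrt (d₂ * α) * |zu n|) ^ 2)
        = fun n => (Real.sqrt (d₂ * α))^2 * |zu n| ^ 2 := by funext n; ring
      rw [h, tsum_mul_left, mul_pow]
      exact mul_le_mul_of_nonneg_left hZB (by positivity)
  -- final arithmetic
  have hfinal : d₁ / α * δ + Real.sqrt (d₂ * α) * E
      = (d₁ / c + Real.sqrt (d₂ * c)) * δ ^ ((1 : ℝ) / 3) * E ^ ((2 : ℝ) / 3) := by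
    have hA : (0:ℝ) < δ ^ ((1:ℝ)/3) := Real.rpow_pos_of_pos hδ _
    have hB : (0:ℝ) < δ ^ ((2:ℝ)/3) := Real.rpow_pos_of_pos hδ _
    have hC : (0:ℝ) < E ^ ((1:ℝ)/3) := Real.rpow_pos_of_pos hE _
    have hD : (0:ℝ) < E ^ ((2:ℝ)/3) := Real.rpow_pos_of_pos hE _
    have hAB : δ ^ ((1:ℝ)/3) * δ ^ ((2:ℝ)/3) = δ := by
      rw [← Real.rpow_add hδ]; norm_num
    have hCD : E ^ ((1:ℝ)/3) * E ^ ((2:ℝ)/3) = E := by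
      rw [← Real.rpow_add hE]; norm_num
    have hrB : (δ / E) ^ ((2:ℝ)/3) = δ ^ ((2:ℝ)/3) / E ^ ((2:ℝ)/3) :=
      Real.div_rpow hδ.le hE.le _
    have hrA : (δ / E) ^ ((1:ℝ)/3) = δ ^ ((1:ℝ)/3) / E ^ ((1:ℝ)/3) :=
      Real.div_rpow hδ.le hE.le _
    have hsqrt : Real.sqrt (d₂ * α) = Real.sqrt (d₂ * c) * (δ ^ ((1:ℝ)/3) / E ^ ((1:ℝ)/3)) := by
      have h1 : d₂ * α = (d₂ * c) * ((δ/E) ^ ((1:ℝ)/3)) ^ 2 := by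
        rw [hαdef, ← Real.rpow_natCast ((δ/E) ^ ((1:ℝ)/3)) 2, ← Real.rpow_mul (div_nonneg hδ.le hE.le)]
        norm_num
        ring
      rw [h1, Real.sqrt_mul (by positivity), Real.sqrt_sq (by positivity), hrA]
    have key1 : d₁ / α * δ = d₁ / c * (δ ^ ((1:ℝ)/3) * E ^ ((2:ℝ)/3)) := by
      rw [hαdef, hrB]
      rw [div_mul_eq_mul_div, div_mul_eq_mul_div]
      rw [div_eq_div_iff (by positivity) (by positivity)]
      field_simp
      linear_combination (-1 : ℝ) * hAB
    have key2 : Real.sqrt (d₂ * α) * E = Real.sqrt (d₂ * c) * (δ ^ ((1:ℝ)/3) * E ^ ((2:ℝ)/3)) := by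
      rw [hsqrt, mul_assoc]
      congr 1
      rw [div_mul_eq_mul_div, div_eq_iff (ne_of_gt hC)]
      linear_combination (-(δ ^ ((1:ℝ)/3))) * hCD
    rw [key1, key2]
    ring
  calc ‖x + (P + Q) - x‖ ≤ ‖P‖ + ‖Q‖ := hPQ
  _ ≤ d₁ / α * δ + Real.sqrt (d₂ * α) * E := add_le_add hPn hQn
  _ = _ := hfinal
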